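/- Let X ∈ ℝ^{I1×I2×I3}, Ω ∈ ℝ^{I2×k×I3}, Y = X*Ω with each Fourier-domain frontal slice of Y of full column rank, W = X^T*Y, and let Y = Û*Ŝ*V̂^T be the economic T-SVD of Y with Ŝ invertible. Setting Q = Y*V̂*Ŝ^{−1} and B = (W*V̂*Ŝ^{−1})^T, one has Q*B = Y*(Y^T*Y)^{−1}*W^T and ‖B‖_F² = trace of the first frontal slice of W^T*W*(Y^T*Y)^{−1}. -/
import Mathlib


open scoped BigOperators

namespace TProd

/-- A third-order tensor given by its frontal slices, indexed cyclically by `ZMod n`. -/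
abbrev Tensor (a b n : ℕ) := ZMod n → Matrix (Fin a) (Fin b) ℝ

/-- The T-product of two third-order tensors (block-circulant construction:
`(X*Y)(k) = ∑ j, X(k−j) ⬝ Y(j)`). -/
noncomputable def tprod {a b c n : ℕ} [NeZero n] (X : Tensor a b n) (Y : Tensor b c n) :
    Tensor a c n :=
  fun k => ∑ j : ZMod n, X (k - j) * Y j

/-- The tensor transpose: transpose each frontal slice and reverse the order of
slices 2 through n. -/
def ttrans {a b n : ℕ} (X : Tensor a b n) : Tensor b a n := fun k => (X (-k)).transpose

/-- The identity tensor: first frontal slice the identity matrix, all others zero. -/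
def tid (a n : ℕ) : Tensor a a n := fun k => if k = 0 then 1 else 0

/-- Squared Frobenius norm of a tensor. -/
def frobSq {a b n : ℕ} [NeZero n] (X : Tensor a b n) : ℝ :=
  ∑ k : ZMod n, ∑ i, ∑ j, (X k i j) ^ 2

/-- Frobenius norm of a tensor. -/
noncomputable def frobNorm {a b n : ℕ} [NeZero n] (X : Tensor a b n) : ℝ :=
  Real.sqrt (frobSq X)

/-- Mode-3 discrete Fourier transform: the i-th Fourier-domain frontal slice. -/
noncomputable def dft {a b n : ℕ} [NeZero n] (X : Tensor a b n) : ZMod n → Matrix (Fin a) (Fin b) ℂ :=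
  fun i => ∑ k : ZMod n,
    Complex.exp (-2 * Real.pi * Complex.I * ((i.val : ℂ) * (k.val : ℂ)) / (n : ℂ)) •
      (X k).map (fun x => (x : ℂ))

/-- A tensor is f-diagonal if all its frontal slices are diagonal matrices. -/
def fDiag {a b n : ℕ} (S : Tensor a b n) : Prop :=
  ∀ k : ZMod n, ∀ i : Fin a, ∀ j : Fin b, (i : ℕ) ≠ (j : ℕ) → S k i j = 0

/-- Orthogonality under the T-product. -/
def Orthogonal {a n : ℕ} [NeZero n] (U : Tensor a a n) : Prop :=
  tprod (ttrans U) U = tid a n ∧ tprod U (ttrans U) = tid a n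

/-- The four tensor Penrose equations: `A` is a Moore–Penrose pseudoinverse of `X`. -/
def IsMP {a b n : ℕ} [NeZero n] (X : Tensor a b n) (A : Tensor b a n) : Prop :=
  tprod (tprod A X) A = A ∧
  tprod (tprod X A) X = X ∧
  ttrans (tprod X A) = tprod X A ∧
  ttrans (tprod A X) = tprod A X

/-- The block-circulant matrix of a tensor. -/
def circ {a b n : ℕ} (X : Tensor a b n) :
    Matrix (ZMod n × Fin a) (ZMod n × Fin b) ℝ :=
  Matrix.of fun p q => X (p.1 - q.1) p.2 q.2

end TProd

open TProd

namespace TProd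

variable {a b c d n : ℕ} [NeZero n]

lemma tprod_assoc (X : Tensor a b n) (Y : Tensor b c n) (Z : Tensor c d n) :
    tprod (tprod X Y) Z = tprod X (tprod Y Z) := by
  funext kk
  simp only [tprod, Matrix.sum_mul, Matrix.mul_sum]
  conv_rhs => rw [Finset.sum_comm]
  refine Finset.sum_congr rfl fun t _ => ?_
  refine Fintype.sum_equiv (Equiv.addRight t) _ _ fun x => ?_
  have h1 : kk - ((Equiv.addRight t) x) = kk - t - x := by simp [Equiv.addRight]; ring
  have h2 : ((Equiv.addRight t) x) - t = x := by simp [Equiv.addRight]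
  rw [h1, h2, Matrix.mul_assoc]

lemma tid_tprod (X : Tensor a b n) : tprod (tid a n) X = X := by
  funext kk
  simp only [tprod, tid]
  rw [Finset.sum_eq_single kk]
  · simp
  · intro j _ hj
    rw [if_neg fun h => hj ((sub_eq_zero.mp h).symm), Matrix.zero_mul]
  · simp

lemma tprod_tid (X : Tensor a b n) : tprod X (tid b n) = X := by
  funext kk
  simp only [tprod, tid]
  rw [Finset.sum_eq_single 0]
  · simp
  · intro j _ hj
    rw [if_neg hj, Matrix.mul_zero]
  · simp

lemma ttrans_tprod (X : Tensor a b n) (Y : Tensor b c n) :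
    ttrans (tprod X Y) = tprod (ttrans Y) (ttrans X) := by
  funext kk
  simp only [ttrans, tprod, Matrix.transpose_sum, Matrix.transpose_mul]
  refine Fintype.sum_equiv (Equiv.addLeft kk) _ _ fun j => ?_
  have h1 : -(kk - ((Equiv.addLeft kk) j)) = j := by simp [Equiv.addLeft]
  have h2 : -((Equiv.addLeft kk) j) = -kk - j := by simp [Equiv.addLeft]; ring
  rw [h1, h2]

omit [NeZero n] in
lemma ttrans_ttrans (X : Tensor a b n) : ttrans (ttrans X) = X := by
  funext kk; simp [ttrans]

omit [NeZero n] in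
lemma ttrans_tid : ttrans (tid a n) = tid a n := by
  funext kk
  simp only [ttrans, tid, neg_eq_zero]
  split <;> simp

lemma tprod_cancel {A : Tensor a b n} {B : Tensor b a n} (h : tprod A B = tid a n)
    (C : Tensor a c n) : tprod A (tprod B C) = C := by
  rw [← tprod_assoc, h, tid_tprod]

lemma trace0_comm (A : Tensor a b n) (B : Tensor b a n) :
    Matrix.trace (tprod A B 0) = Matrix.trace (tprod B A 0) := by
  simp only [tprod, Matrix.trace_sum, zero_sub]
  calc ∑ j : ZMod n, (A (-j) * B j).trace
      = ∑ j : ZMod n, (B j * A (-j)).trace :=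
        Finset.sum_congr rfl fun j _ => Matrix.trace_mul_comm _ _
    _ = ∑ j : ZMod n, (B (-j) * A j).trace :=
        Fintype.sum_equiv (Equiv.neg _) _ _ fun j => by
          simp only [Equiv.neg_apply, neg_neg]

lemma frobSq_eq_trace0 (B : Tensor a b n) :
    frobSq B = Matrix.trace (tprod B (ttrans B) 0) := by
  simp only [tprod, ttrans, Matrix.trace_sum, zero_sub, frobSq]
  refine Fintype.sum_equiv (Equiv.neg _) _ _ fun j => ?_
  simp only [Equiv.neg_apply, Matrix.trace, Matrix.diag_apply, Matrix.mul_apply,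
    Matrix.transpose_apply, sq, neg_neg]

end TProd

/-- Theorem 1 of the paper: with Q = Y*V̂*Ŝ⁻¹ and B = (W*V̂*Ŝ⁻¹)ᵀ,
one has Q*B = Y*(Yᵀ*Y)⁻¹*Wᵀ and ‖B‖_F² = trace of the first frontal slice of
Wᵀ*W*(Yᵀ*Y)⁻¹. -/
theorem fixed_precision_thm (I1 I2 I3 k : ℕ) [NeZero I3]
    (X : Tensor I1 I2 I3) (Om : Tensor I2 k I3)
    (Y : Tensor I1 k I3) (hY : Y = tprod X Om)
    (hfull : ∀ i : ZMod I3, (dft Y i).rank = k)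
    (W : Tensor I2 k I3) (hW : W = tprod (ttrans X) Y)
    (U S V : Tensor _ _ I3)
    (hsvd : Y = tprod (tprod (U : Tensor I1 k I3) (S : Tensor k k I3))
      (ttrans (V : Tensor k k I3)))
    (hU : tprod (ttrans U) U = tid k I3)
    (hV : Orthogonal V)
    (hS : fDiag S)
    (Sinv : Tensor k k I3)
    (hSinv : tprod S Sinv = tid k I3 ∧ tprod Sinv S = tid k I3)
    (Zinv : Tensor k k I3)
    (hZinv : tprod (tprod (ttrans Y) Y) Zinv = tid k I3 ∧
             tprod Zinv (tprod (ttrans Y) Y) = tid k I3)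
    (Q : Tensor I1 k I3) (B : Tensor k I2 I3)
    (hQ : Q = tprod (tprod Y V) Sinv)
    (hB : B = ttrans (tprod (tprod W V) Sinv)) :
    tprod Q B = tprod (tprod Y Zinv) (ttrans W) ∧
    frobSq B = Matrix.trace (tprod (tprod (ttrans W) W) Zinv 0) := by
  subst hQ hB
  set C : Tensor k k I3 := tprod V (tprod Sinv (tprod (ttrans Sinv) (ttrans V))) with hC
  have hSt : tprod (ttrans S) (ttrans Sinv) = tid k I3 := by
    rw [← ttrans_tprod, hSinv.2, ttrans_tid]
  have hSt2 : tprod (ttrans Sinv) (ttrans S) = tid k I3 := by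
    rw [← ttrans_tprod, hSinv.1, ttrans_tid]
  have hYY : tprod (ttrans Y) Y = tprod V (tprod (ttrans S) (tprod S (ttrans V))) := by
    conv_lhs => rw [hsvd]
    simp only [ttrans_tprod, ttrans_ttrans, tprod_assoc]
    conv_lhs => rw [tprod_cancel hU (tprod S (ttrans V))]
  have hCZ : tprod (tprod (ttrans Y) Y) C = tid k I3 := by
    rw [hYY, hC]
    simp only [tprod_assoc]
    rw [tprod_cancel hV.1 (tprod Sinv (tprod (ttrans Sinv) (ttrans V))),
        tprod_cancel hSinv.1 (tprod (ttrans Sinv) (ttrans V)), tprod_cancel hSt (ttrans V)]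
    exact hV.2
  have hZC : tprod C (tprod (ttrans Y) Y) = tid k I3 := by
    rw [hYY, hC]
    simp only [tprod_assoc]
    rw [tprod_cancel hV.1 (tprod (ttrans S) (tprod S (ttrans V))),
        tprod_cancel hSt2 (tprod S (ttrans V)), tprod_cancel hSinv.2 (ttrans V)]
    exact hV.2
  have hZ : Zinv = C := by
    calc Zinv = tprod Zinv (tid k I3) := (tprod_tid _).symm
    _ = tprod Zinv (tprod (tprod (ttrans Y) Y) C) := by rw [hCZ]
    _ = tprod (tprod Zinv (tprod (ttrans Y) Y)) C := (tprod_assoc _ _ _).symm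
    _ = C := by rw [hZinv.2, tid_tprod]
  constructor
  · rw [hZ, hC]
    simp only [ttrans_tprod, ttrans_ttrans, tprod_assoc]
  · rw [frobSq_eq_trace0, ttrans_ttrans, trace0_comm, hZ]
    conv_rhs => rw [tprod_assoc, trace0_comm]
    congr 1
    simp only [hC, ttrans_tprod, ttrans_ttrans, tprod_assoc]
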